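/- arXiv:1902.03903 — 3 statements merged into one kernel-verified Lean document; each statement's English description precedes it below -/
import Mathlib

section
/- Let N ≥ 3 and 1 ≤ k < N/2. The Hopf variables a_k, b_k, c_k, d_k on ℝ^{2N} satisfy the Poisson-bracket relations {b_k, c_k} = 2 d_k, {b_k, d_k} = −2 c_k, {c_k, d_k} = 2 b_k, and {a_k, b_k} = {a_k, c_k} = {a_k, d_k} = 0. -/
noncomputable section

open Finset

/-- The Poisson bracket on `ℝ^{2N}` with coordinates `(Q, P)`:
`{f,g} = Σ_k (∂f/∂Q_k ∂g/∂P_k − ∂f/∂P_k ∂g/∂Q_k)`. -/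
def pb {N : ℕ} (f g : ((Fin N → ℝ) × (Fin N → ℝ)) → ℝ)
    (x : (Fin N → ℝ) × (Fin N → ℝ)) : ℝ :=
  ∑ k : Fin N,
    (fderiv ℝ f x (Pi.single k (1 : ℝ), 0) * fderiv ℝ g x (0, Pi.single k (1 : ℝ))
      - fderiv ℝ f x (0, Pi.single k (1 : ℝ)) * fderiv ℝ g x (Pi.single k (1 : ℝ), 0))

/-- The coordinate with (1-based) label `j` is the component `(j−1) mod N` of `Fin N`. -/
def co (N : ℕ) (hN : 0 < N) (j : ℕ) : Fin N := ⟨(j - 1) % N, Nat.mod_lt _ hN⟩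

/-- Hopf variable `a_k = ½(Q_k² + P_k² + Q_{N−k}² + P_{N−k}²)`. -/
def aH (N : ℕ) (hN : 0 < N) (k : ℕ) (x : (Fin N → ℝ) × (Fin N → ℝ)) : ℝ :=
  (x.1 (co N hN k) ^ 2 + x.2 (co N hN k) ^ 2
    + x.1 (co N hN (N - k)) ^ 2 + x.2 (co N hN (N - k)) ^ 2) / 2

/-- Hopf variable `b_k = Q_k P_{N−k} − Q_{N−k} P_k`. -/
def bH (N : ℕ) (hN : 0 < N) (k : ℕ) (x : (Fin N → ℝ) × (Fin N → ℝ)) : ℝ :=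
  x.1 (co N hN k) * x.2 (co N hN (N - k)) - x.1 (co N hN (N - k)) * x.2 (co N hN k)

/-- Hopf variable `c_k = ½(Q_k² + P_k² − Q_{N−k}² − P_{N−k}²)`. -/
def cH (N : ℕ) (hN : 0 < N) (k : ℕ) (x : (Fin N → ℝ) × (Fin N → ℝ)) : ℝ :=
  (x.1 (co N hN k) ^ 2 + x.2 (co N hN k) ^ 2
    - x.1 (co N hN (N - k)) ^ 2 - x.2 (co N hN (N - k)) ^ 2) / 2

/-- Hopf variable `d_k = Q_k Q_{N−k} + P_k P_{N−k}`. -/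
def dH (N : ℕ) (hN : 0 < N) (k : ℕ) (x : (Fin N → ℝ) × (Fin N → ℝ)) : ℝ :=
  x.1 (co N hN k) * x.1 (co N hN (N - k)) + x.2 (co N hN k) * x.2 (co N hN (N - k))

def LQ {N : ℕ} (m : Fin N) : ((Fin N → ℝ) × (Fin N → ℝ)) →L[ℝ] ℝ :=
  (ContinuousLinearMap.proj m).comp (ContinuousLinearMap.fst ℝ _ _)

def LP {N : ℕ} (m : Fin N) : ((Fin N → ℝ) × (Fin N → ℝ)) →L[ℝ] ℝ :=
  (ContinuousLinearMap.proj m).comp (ContinuousLinearMap.snd ℝ _ _)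

lemma hasQ {N : ℕ} (m : Fin N) (x : (Fin N → ℝ) × (Fin N → ℝ)) :
    HasFDerivAt (fun y : (Fin N → ℝ) × (Fin N → ℝ) => y.1 m) (LQ m) x :=
  (LQ m).hasFDerivAt

lemma hasP {N : ℕ} (m : Fin N) (x : (Fin N → ℝ) × (Fin N → ℝ)) :
    HasFDerivAt (fun y : (Fin N → ℝ) × (Fin N → ℝ) => y.2 m) (LP m) x :=
  (LP m).hasFDerivAt

lemma fd_a (N : ℕ) (hN0 : 0 < N) (k : ℕ) (x v : (Fin N → ℝ) × (Fin N → ℝ)) :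
    fderiv ℝ (aH N hN0 k) x v
      = x.1 (co N hN0 k) * v.1 (co N hN0 k) + x.2 (co N hN0 k) * v.2 (co N hN0 k)
        + x.1 (co N hN0 (N - k)) * v.1 (co N hN0 (N - k))
        + x.2 (co N hN0 (N - k)) * v.2 (co N hN0 (N - k)) := by
  set i := co N hN0 k
  set j := co N hN0 (N - k)
  have hfun : aH N hN0 k = fun y : (Fin N → ℝ) × (Fin N → ℝ) =>
      (y.1 i * y.1 i + y.2 i * y.2 i + y.1 j * y.1 j + y.2 j * y.2 j) * 2⁻¹ := by
    funext y; simp only [aH]; ring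
  have h := (((((hasQ i x).mul (hasQ i x)).add ((hasP i x).mul (hasP i x))).add
      ((hasQ j x).mul (hasQ j x))).add ((hasP j x).mul (hasP j x))).mul_const ((2:ℝ)⁻¹)
  erw [hfun, h.fderiv]
  simp [LQ, LP]
  ring

lemma fd_c (N : ℕ) (hN0 : 0 < N) (k : ℕ) (x v : (Fin N → ℝ) × (Fin N → ℝ)) :
    fderiv ℝ (cH N hN0 k) x v
      = x.1 (co N hN0 k) * v.1 (co N hN0 k) + x.2 (co N hN0 k) * v.2 (co N hN0 k)
        - x.1 (co N hN0 (N - k)) * v.1 (co N hN0 (N - k))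
        - x.2 (co N hN0 (N - k)) * v.2 (co N hN0 (N - k)) := by
  set i := co N hN0 k
  set j := co N hN0 (N - k)
  have hfun : cH N hN0 k = fun y : (Fin N → ℝ) × (Fin N → ℝ) =>
      (y.1 i * y.1 i + y.2 i * y.2 i - y.1 j * y.1 j - y.2 j * y.2 j) * 2⁻¹ := by
    funext y; simp only [cH]; ring
  have h := (((((hasQ i x).mul (hasQ i x)).add ((hasP i x).mul (hasP i x))).sub
      ((hasQ j x).mul (hasQ j x))).sub ((hasP j x).mul (hasP j x))).mul_const ((2:ℝ)⁻¹)
  erw [hfun, h.fderiv]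
  simp [LQ, LP]
  ring

lemma fd_b (N : ℕ) (hN0 : 0 < N) (k : ℕ) (x v : (Fin N → ℝ) × (Fin N → ℝ)) :
    fderiv ℝ (bH N hN0 k) x v
      = v.1 (co N hN0 k) * x.2 (co N hN0 (N - k)) + x.1 (co N hN0 k) * v.2 (co N hN0 (N - k))
        - v.1 (co N hN0 (N - k)) * x.2 (co N hN0 k)
        - x.1 (co N hN0 (N - k)) * v.2 (co N hN0 k) := by
  set i := co N hN0 k
  set j := co N hN0 (N - k)
  have hfun : bH N hN0 k = fun y : (Fin N → ℝ) × (Fin N → ℝ) =>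
      y.1 i * y.2 j - y.1 j * y.2 i := rfl
  have h := ((hasQ i x).mul (hasP j x)).sub ((hasQ j x).mul (hasP i x))
  erw [hfun, h.fderiv]
  simp [LQ, LP]
  ring

lemma fd_d (N : ℕ) (hN0 : 0 < N) (k : ℕ) (x v : (Fin N → ℝ) × (Fin N → ℝ)) :
    fderiv ℝ (dH N hN0 k) x v
      = v.1 (co N hN0 k) * x.1 (co N hN0 (N - k)) + x.1 (co N hN0 k) * v.1 (co N hN0 (N - k))
        + v.2 (co N hN0 k) * x.2 (co N hN0 (N - k))
        + x.2 (co N hN0 k) * v.2 (co N hN0 (N - k)) := by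
  set i := co N hN0 k
  set j := co N hN0 (N - k)
  have hfun : dH N hN0 k = fun y : (Fin N → ℝ) × (Fin N → ℝ) =>
      y.1 i * y.1 j + y.2 i * y.2 j := rfl
  have h := ((hasQ i x).mul (hasQ j x)).add ((hasP i x).mul (hasP j x))
  erw [hfun, h.fderiv]
  simp [LQ, LP]
  ring

/-- For `N ≥ 3` and `1 ≤ k < N/2`, the Hopf variables satisfy
`{b_k, c_k} = 2 d_k`, `{b_k, d_k} = −2 c_k`, `{c_k, d_k} = 2 b_k`, and
`{a_k, b_k} = {a_k, c_k} = {a_k, d_k} = 0`. -/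
theorem hopf_poisson_relations (N : ℕ) (hN : 3 ≤ N) (hN0 : 0 < N)
    (k : ℕ) (hk1 : 1 ≤ k) (hk2 : 2 * k < N) :
    (∀ x, pb (bH N hN0 k) (cH N hN0 k) x = 2 * dH N hN0 k x) ∧
    (∀ x, pb (bH N hN0 k) (dH N hN0 k) x = -2 * cH N hN0 k x) ∧
    (∀ x, pb (cH N hN0 k) (dH N hN0 k) x = 2 * bH N hN0 k x) ∧
    (∀ x, pb (aH N hN0 k) (bH N hN0 k) x = 0) ∧
    (∀ x, pb (aH N hN0 k) (cH N hN0 k) x = 0) ∧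
    (∀ x, pb (aH N hN0 k) (dH N hN0 k) x = 0) := by
  have hij : co N hN0 k ≠ co N hN0 (N - k) := by
    simp only [co, Fin.mk.injEq, ne_eq]
    rw [Nat.mod_eq_of_lt (by omega), Nat.mod_eq_of_lt (by omega)]
    omega
  set i := co N hN0 k with hi
  set j := co N hN0 (N - k) with hj
  refine ⟨?_, ?_, ?_, ?_, ?_, ?_⟩ <;> intro x <;>
  · unfold pb
    rw [Finset.sum_eq_add i j hij
      (fun m _ hm => by
        simp [fd_a, fd_b, fd_c, fd_d, ← hi, ← hj, Pi.single_apply,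
          (hm.1.symm : i ≠ m), (hm.2.symm : j ≠ m)])
      (fun h => absurd (Finset.mem_univ i) h)
      (fun h => absurd (Finset.mem_univ j) h)]
    simp [fd_a, fd_b, fd_c, fd_d, ← hi, ← hj, Pi.single_apply, hij, hij.symm,
      aH, bH, cH, dH]
    ring

end
end

section
/- Let N ≥ 3 be odd, β ∈ ℝ, and set ω_k = √(1 + 4 sin²(kπ/N)) for k = 1, …, N. Let H₂ = Σ_{k=1}^N (ω_k/2)(Q_k² + P_k²) and let H̄₄ = (β/(2N)) [ (3/4) Σ_{k=1}^{(N−1)/2} (3a_k² − b_k²)/ω_k² + (3/2) a_N²/ω_N² + 6 (a_N/ω_N) Σ_{k=1}^{(N−1)/2} a_k/ω_k + 6 Σ_{1≤k<l≤(N−1)/2} a_k a_l/(ω_k ω_l) ]. Then {H₂, H̄₄} = 0, i.e. the truncated normal form H̄ = H₂ + H̄₄ Poisson-commutes with its quadratic part. -/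
noncomputable section

open Finset

/-- `a_N = ½(Q_N² + P_N²)`. -/
def aNf (N : ℕ) (hN : 0 < N) (x : (Fin N → ℝ) × (Fin N → ℝ)) : ℝ :=
  (x.1 (co N hN N) ^ 2 + x.2 (co N hN N) ^ 2) / 2

/-- The normal-mode frequencies `ω_k = √(1 + 4 sin²(kπ/N))` (note `ω_N = 1`). -/
def omg (N k : ℕ) : ℝ := Real.sqrt (1 + 4 * Real.sin (k * Real.pi / N) ^ 2)

/-- The quadratic part `H₂ = Σ_{k=1}^N (ω_k/2)(Q_k² + P_k²)`. -/
def H2KG (N : ℕ) (hN : 0 < N) (x : (Fin N → ℝ) × (Fin N → ℝ)) : ℝ :=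
  ∑ k ∈ Finset.Icc 1 N, omg N k / 2 * (x.1 (co N hN k) ^ 2 + x.2 (co N hN k) ^ 2)

/-- The fourth order part `H̄₄` of the normal form of the periodic KG lattice, `N` odd:
`H̄₄ = (β/(2N)) [ (3/4) Σ_{k=1}^{(N−1)/2} (3a_k² − b_k²)/ω_k² + (3/2) a_N²/ω_N²
+ 6 (a_N/ω_N) Σ_{k=1}^{(N−1)/2} a_k/ω_k + 6 Σ_{1≤k<l≤(N−1)/2} a_k a_l/(ω_k ω_l) ]`. -/
def H4odd (N : ℕ) (hN : 0 < N) (β : ℝ) (x : (Fin N → ℝ) × (Fin N → ℝ)) : ℝ :=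
  β / (2 * N) *
    ((3 / 4) * ∑ k ∈ Finset.Icc 1 ((N - 1) / 2),
        (3 * aH N hN k x ^ 2 - bH N hN k x ^ 2) / omg N k ^ 2
      + (3 / 2) * aNf N hN x ^ 2 / omg N N ^ 2
      + 6 * (aNf N hN x / omg N N) * ∑ k ∈ Finset.Icc 1 ((N - 1) / 2), aH N hN k x / omg N k
      + 6 * ∑ k ∈ Finset.Icc 1 ((N - 1) / 2), ∑ l ∈ Finset.Icc (k + 1) ((N - 1) / 2),
          aH N hN k x * aH N hN l x / (omg N k * omg N l))

/-! ### Auxiliary machinery -/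

abbrev EE (N : ℕ) := (Fin N → ℝ) × (Fin N → ℝ)

namespace KGaux

variable {N : ℕ}

lemma D_Q (j : Fin N) (x v : EE N) : fderiv ℝ (fun y : EE N => y.1 j) x v = v.1 j := by
  have h : (fun y : EE N => y.1 j)
      = ((ContinuousLinearMap.proj j).comp (ContinuousLinearMap.fst ℝ (Fin N → ℝ) (Fin N → ℝ))) := rfl
  rw [h, ContinuousLinearMap.fderiv]; rfl

lemma D_P (j : Fin N) (x v : EE N) : fderiv ℝ (fun y : EE N => y.2 j) x v = v.2 j := by
  have h : (fun y : EE N => y.2 j)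
      = ((ContinuousLinearMap.proj j).comp (ContinuousLinearMap.snd ℝ (Fin N → ℝ) (Fin N → ℝ))) := rfl
  rw [h, ContinuousLinearMap.fderiv]; rfl

variable {f g : EE N → ℝ} {x v : EE N} {c : ℝ}

lemma D_add (hf : DifferentiableAt ℝ f x) (hg : DifferentiableAt ℝ g x) :
    fderiv ℝ (fun y => f y + g y) x v = fderiv ℝ f x v + fderiv ℝ g x v := by
  rw [fderiv_fun_add hf hg]; rfl

lemma D_sub (hf : DifferentiableAt ℝ f x) (hg : DifferentiableAt ℝ g x) :
    fderiv ℝ (fun y => f y - g y) x v = fderiv ℝ f x v - fderiv ℝ g x v := by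
  rw [fderiv_fun_sub hf hg]; rfl

lemma D_mul (hf : DifferentiableAt ℝ f x) (hg : DifferentiableAt ℝ g x) :
    fderiv ℝ (fun y => f y * g y) x v = f x * fderiv ℝ g x v + g x * fderiv ℝ f x v := by
  rw [fderiv_fun_mul hf hg]; simp [smul_eq_mul]

lemma D_const_mul (hf : DifferentiableAt ℝ f x) (c : ℝ) :
    fderiv ℝ (fun y => c * f y) x v = c * fderiv ℝ f x v := by
  rw [fderiv_const_mul hf]; simp

lemma D_div_const (hf : DifferentiableAt ℝ f x) (c : ℝ) :
    fderiv ℝ (fun y => f y / c) x v = fderiv ℝ f x v / c := by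
  have h : (fun y => f y / c) = fun y => c⁻¹ * f y := by funext y; ring
  rw [h, D_const_mul hf]; ring

lemma D_sq (hf : DifferentiableAt ℝ f x) :
    fderiv ℝ (fun y => f y ^ 2) x v = 2 * f x * fderiv ℝ f x v := by
  have h : (fun y => f y ^ 2) = fun y => f y * f y := by funext y; ring
  rw [h, D_mul hf hf]; ring

lemma D_sum {ι : Type*} {s : Finset ι} {F : ι → EE N → ℝ}
    (h : ∀ i ∈ s, DifferentiableAt ℝ (F i) x) :
    fderiv ℝ (fun y => ∑ i ∈ s, F i y) x v = ∑ i ∈ s, fderiv ℝ (F i) x v := by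
  have := HasFDerivAt.fun_sum (fun i hi => ((h i hi).hasFDerivAt)) (u := s)
  rw [this.fderiv]; simp

/-! frequencies -/

def wf (N : ℕ) (j : Fin N) : ℝ := omg N (j.1 + 1)

lemma co_val (hN : 0 < N) {k : ℕ} (h1 : 1 ≤ k) (h2 : k ≤ N) :
    (co N hN k).1 = k - 1 := by
  simp only [co]
  exact Nat.mod_eq_of_lt (by omega)

lemma wf_co (hN : 0 < N) {k : ℕ} (h1 : 1 ≤ k) (h2 : k ≤ N) :
    wf N (co N hN k) = omg N k := by
  unfold wf
  rw [co_val hN h1 h2]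
  congr 1
  omega

lemma omg_symm (hN : 0 < N) {k : ℕ} (hk : k ≤ N) : omg N (N - k) = omg N k := by
  unfold omg
  congr 2
  have hc : ((N - k : ℕ) : ℝ) = (N : ℝ) - k := Nat.cast_sub hk
  rw [hc]
  have hNne : (N : ℝ) ≠ 0 := by positivity
  have h2 : ((N : ℝ) - k) * Real.pi / N = Real.pi - k * Real.pi / N := by
    field_simp
  rw [h2, Real.sin_pi_sub]

lemma wf_co_symm (hN : 0 < N) {k : ℕ} (h1 : 1 ≤ k) (h2 : k + 1 ≤ N) :
    wf N (co N hN (N - k)) = wf N (co N hN k) := by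
  rw [wf_co hN (by omega) (by omega), wf_co hN h1 (by omega), omg_symm hN (by omega)]

/-! differentiability -/

@[fun_prop]
lemma diff_aH (hN : 0 < N) (k : ℕ) : Differentiable ℝ (aH N hN k) := by
  unfold aH; fun_prop

@[fun_prop]
lemma diff_bH (hN : 0 < N) (k : ℕ) : Differentiable ℝ (bH N hN k) := by
  unfold bH; fun_prop

@[fun_prop]
lemma diff_aNf (hN : 0 < N) : Differentiable ℝ (aNf N hN) := by
  unfold aNf; fun_prop

/-! the Hamiltonian vector field of H₂ -/

def Vf (x : EE N) : EE N :=
  (fun j => -(wf N j * x.2 j), fun j => wf N j * x.1 j)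

lemma DV_aH (hN : 0 < N) (k : ℕ) (x : EE N) :
    fderiv ℝ (aH N hN k) x (Vf x) = 0 := by
  have h : aH N hN k = fun y : EE N =>
      (y.1 (co N hN k) ^ 2 + y.2 (co N hN k) ^ 2
        + y.1 (co N hN (N - k)) ^ 2 + y.2 (co N hN (N - k)) ^ 2) / 2 := rfl
  rw [h]
  rw [D_div_const (by fun_prop),
    D_add (f := fun y : EE N => y.1 (co N hN k) ^ 2 + y.2 (co N hN k) ^ 2
      + y.1 (co N hN (N - k)) ^ 2) (by fun_prop) (by fun_prop),
    D_add (f := fun y : EE N => y.1 (co N hN k) ^ 2 + y.2 (co N hN k) ^ 2)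
      (by fun_prop) (by fun_prop),
    D_add (f := fun y : EE N => y.1 (co N hN k) ^ 2) (by fun_prop) (by fun_prop),
    D_sq (by fun_prop), D_sq (by fun_prop), D_sq (by fun_prop), D_sq (by fun_prop),
    D_Q, D_P, D_Q, D_P]
  simp only [Vf]
  ring

lemma DV_aNf (hN : 0 < N) (x : EE N) :
    fderiv ℝ (aNf N hN) x (Vf x) = 0 := by
  have h : aNf N hN = fun y : EE N =>
      (y.1 (co N hN N) ^ 2 + y.2 (co N hN N) ^ 2) / 2 := rfl
  rw [h]
  rw [D_div_const (by fun_prop),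
    D_add (f := fun y : EE N => y.1 (co N hN N) ^ 2) (by fun_prop) (by fun_prop),
    D_sq (by fun_prop), D_sq (by fun_prop), D_Q, D_P]
  simp only [Vf]
  ring

lemma DV_bH (hN : 0 < N) {k : ℕ} (h1 : 1 ≤ k) (h2 : k + 1 ≤ N) (x : EE N) :
    fderiv ℝ (bH N hN k) x (Vf x) = 0 := by
  have h : bH N hN k = fun y : EE N =>
      y.1 (co N hN k) * y.2 (co N hN (N - k))
        - y.1 (co N hN (N - k)) * y.2 (co N hN k) := rfl
  rw [h]
  rw [D_sub (f := fun y : EE N => y.1 (co N hN k) * y.2 (co N hN (N - k)))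
      (by fun_prop) (by fun_prop),
    D_mul (by fun_prop) (by fun_prop), D_mul (by fun_prop) (by fun_prop),
    D_Q, D_P, D_Q, D_P]
  have hw := wf_co_symm hN h1 h2
  simp only [Vf]
  rw [hw]; ring

/-! zero-derivative predicate along `Vf x` -/

def Zat (x : EE N) (f : EE N → ℝ) : Prop :=
  DifferentiableAt ℝ f x ∧ fderiv ℝ f x (Vf x) = 0

lemma Zat.add (hf : Zat x f) (hg : Zat x g) : Zat x (fun y => f y + g y) :=
  ⟨hf.1.add hg.1, by rw [D_add hf.1 hg.1, hf.2, hg.2]; ring⟩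

lemma Zat.sub (hf : Zat x f) (hg : Zat x g) : Zat x (fun y => f y - g y) :=
  ⟨hf.1.sub hg.1, by rw [D_sub hf.1 hg.1, hf.2, hg.2]; ring⟩

lemma Zat.mul (hf : Zat x f) (hg : Zat x g) : Zat x (fun y => f y * g y) :=
  ⟨hf.1.mul hg.1, by rw [D_mul hf.1 hg.1, hf.2, hg.2]; ring⟩

lemma Zat.const_mul (hf : Zat x f) (c : ℝ) : Zat x (fun y => c * f y) :=
  ⟨hf.1.const_mul c, by rw [D_const_mul hf.1, hf.2]; ring⟩

lemma Zat.div_const (hf : Zat x f) (c : ℝ) : Zat x (fun y => f y / c) :=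
  ⟨by
    have h : (fun y => f y / c) = fun y => c⁻¹ * f y := by funext y; ring
    rw [h]; exact hf.1.const_mul c⁻¹,
   by rw [D_div_const hf.1, hf.2]; ring⟩

lemma Zat.sq (hf : Zat x f) : Zat x (fun y => f y ^ 2) :=
  ⟨hf.1.pow 2, by rw [D_sq hf.1, hf.2]; ring⟩

lemma Zat.sum {ι : Type*} {s : Finset ι} {F : ι → EE N → ℝ}
    (h : ∀ i ∈ s, Zat x (F i)) : Zat x (fun y => ∑ i ∈ s, F i y) := by
  refine ⟨DifferentiableAt.fun_sum (fun i hi => (h i hi).1), ?_⟩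
  rw [D_sum (fun i hi => (h i hi).1)]
  exact Finset.sum_eq_zero (fun i hi => (h i hi).2)

lemma Zat_aH (hN : 0 < N) (k : ℕ) (x : EE N) : Zat x (aH N hN k) :=
  ⟨(diff_aH hN k).differentiableAt, DV_aH hN k x⟩

lemma Zat_aNf (hN : 0 < N) (x : EE N) : Zat x (aNf N hN) :=
  ⟨(diff_aNf hN).differentiableAt, DV_aNf hN x⟩

lemma Zat_bH (hN : 0 < N) {k : ℕ} (h1 : 1 ≤ k) (h2 : k + 1 ≤ N) (x : EE N) :
    Zat x (bH N hN k) :=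
  ⟨(diff_bH hN k).differentiableAt, DV_bH hN h1 h2 x⟩

lemma Zat_H4 (hN : 0 < N) (β : ℝ) (x : EE N) : Zat x (H4odd N hN β) := by
  unfold H4odd
  apply Zat.const_mul
  apply Zat.add
  apply Zat.add
  apply Zat.add
  · apply Zat.const_mul
    apply Zat.sum
    intro k hk
    apply Zat.div_const
    apply Zat.sub
    · exact Zat.const_mul (Zat.sq (Zat_aH hN k x)) 3
    · have hm := Finset.mem_Icc.mp hk
      exact Zat.sq (Zat_bH hN hm.1 (by omega) x)
  · exact Zat.div_const (Zat.const_mul (Zat.sq (Zat_aNf hN x)) (3/2)) _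
  · apply Zat.mul
    · exact Zat.const_mul (Zat.div_const (Zat_aNf hN x) _) 6
    · apply Zat.sum
      intro k hk
      exact Zat.div_const (Zat_aH hN k x) _
  · apply Zat.const_mul
    apply Zat.sum
    intro k hk
    apply Zat.sum
    intro l hl
    exact Zat.div_const (Zat.mul (Zat_aH hN k x) (Zat_aH hN l x)) _

/-! derivative of H₂ in coordinate directions -/

lemma D_H2 (hN : 0 < N) (x v : EE N) :
    fderiv ℝ (H2KG N hN) x v = ∑ k ∈ Finset.Icc 1 N,
      omg N k * (x.1 (co N hN k) * v.1 (co N hN k) + x.2 (co N hN k) * v.2 (co N hN k)) := by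
  have h : H2KG N hN = fun y : EE N => ∑ k ∈ Finset.Icc 1 N,
      omg N k / 2 * (y.1 (co N hN k) ^ 2 + y.2 (co N hN k) ^ 2) := rfl
  rw [h, D_sum (fun i hi => by fun_prop)]
  refine Finset.sum_congr rfl (fun k hk => ?_)
  rw [D_const_mul (by fun_prop), D_add (f := fun y : EE N => y.1 (co N hN k) ^ 2)
    (by fun_prop) (by fun_prop), D_sq (by fun_prop), D_sq (by fun_prop), D_Q, D_P]
  ring

lemma co_succ (hN : 0 < N) (j : Fin N) : co N hN (j.1 + 1) = j := by
  apply Fin.ext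
  rw [co_val hN (by omega) (by omega)]
  omega

lemma D_H2_Q (hN : 0 < N) (x : EE N) (j : Fin N) :
    fderiv ℝ (H2KG N hN) x (Pi.single j 1, 0) = wf N j * x.1 j := by
  rw [D_H2 hN]
  rw [Finset.sum_eq_single_of_mem (j.1 + 1)
    (Finset.mem_Icc.mpr ⟨by omega, by omega⟩)]
  · rw [co_succ hN j]
    simp [Pi.single_apply, wf]
  · intro k hk hne
    have hm := Finset.mem_Icc.mp hk
    have hco : co N hN k ≠ j := by
      intro hEq
      apply hne
      have := co_val hN hm.1 hm.2
      rw [hEq] at this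
      omega
    simp [Pi.single_apply, hco]

lemma D_H2_P (hN : 0 < N) (x : EE N) (j : Fin N) :
    fderiv ℝ (H2KG N hN) x (0, Pi.single j 1) = wf N j * x.2 j := by
  rw [D_H2 hN]
  rw [Finset.sum_eq_single_of_mem (j.1 + 1)
    (Finset.mem_Icc.mpr ⟨by omega, by omega⟩)]
  · rw [co_succ hN j]
    simp [Pi.single_apply, wf]
  · intro k hk hne
    have hm := Finset.mem_Icc.mp hk
    have hco : co N hN k ≠ j := by
      intro hEq
      apply hne
      have := co_val hN hm.1 hm.2
      rw [hEq] at this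
      omega
    simp [Pi.single_apply, hco]

/-! linear decomposition -/

lemma apply_decomp (φ : EE N →L[ℝ] ℝ) (u w : Fin N → ℝ) :
    φ (u, w) = ∑ j : Fin N, u j * φ (Pi.single j 1, 0)
      + ∑ j : Fin N, w j * φ (0, Pi.single j 1) := by
  have huv : ((u, w) : EE N)
      = (∑ j : Fin N, u j • (((Pi.single j 1 : Fin N → ℝ), (0 : Fin N → ℝ)) : EE N))
        + ∑ j : Fin N, w j • (((0 : Fin N → ℝ), (Pi.single j 1 : Fin N → ℝ)) : EE N) := by
    apply Prod.ext
    · simp only [Prod.fst_add, Prod.fst_sum, Prod.smul_fst]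
      funext i
      simp [Finset.sum_apply, Pi.single_apply]
    · simp only [Prod.snd_add, Prod.snd_sum, Prod.smul_snd]
      funext i
      simp [Finset.sum_apply, Pi.single_apply]
  have h0 : ∀ (a : ℝ) (p : Fin N → ℝ), ((a • p, (0 : Fin N → ℝ)) : EE N) = a • ((p, 0) : EE N) := by
    intro a p; rw [Prod.smul_mk, smul_zero]
  have h0' : ∀ (a : ℝ) (p : Fin N → ℝ), (((0 : Fin N → ℝ), a • p) : EE N) = a • ((0, p) : EE N) := by
    intro a p; rw [Prod.smul_mk, smul_zero]
  rw [huv, map_add, map_sum, map_sum]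
  simp only [Prod.smul_mk, smul_zero]
  simp only [h0, h0', map_smul, smul_eq_mul]

end KGaux

open KGaux in
/-- For `N ≥ 3` odd, the truncated normal form `H̄ = H₂ + H̄₄` of the
periodic KG lattice Poisson-commutes with its quadratic part: `{H₂, H̄₄} = 0`. -/
theorem H2_commutes_with_H4_odd (N : ℕ) (hN : 3 ≤ N) (hodd : Odd N) (hN0 : 0 < N)
    (β : ℝ) :
    ∀ x, pb (H2KG N hN0) (H4odd N hN0 β) x = 0 := by
  intro x
  unfold pb
  simp only [D_H2_Q hN0 x, D_H2_P hN0 x]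
  have hφ : fderiv ℝ (H4odd N hN0 β) x (Vf x) = 0 := (Zat_H4 hN0 β x).2
  rw [show (Vf x : EE N) = ((fun j => -(wf N j * x.2 j)), (fun j => wf N j * x.1 j)) from rfl,
    apply_decomp] at hφ
  simp only [neg_mul, Finset.sum_neg_distrib] at hφ
  rw [Finset.sum_sub_distrib]
  linarith [hφ]


end
end

section
/- Let N ≥ 1 and let λ_1, …, λ_N be nonzero real numbers. Then the N×N symmetric matrix A with entries A_{ij} = λ_i λ_j for i ≠ j, A_{ii} = (3/4) λ_i² for 1 ≤ i ≤ N−1, and A_{NN} = (1/2) λ_N², is invertible. -/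
open Matrix Finset

/-- For `N ≥ 1` and nonzero reals `λ_1, …, λ_N`, the symmetric
`N×N` matrix with off-diagonal entries `λ_i λ_j`, diagonal entries `(3/4)λ_i²`
for `i ≤ N−1` and `(1/2)λ_N²` in the last diagonal position, is invertible. -/
theorem hessian_matrix_invertible (N : ℕ) (hN : 1 ≤ N) (lam : Fin N → ℝ)
    (hlam : ∀ i, lam i ≠ 0) (A : Matrix (Fin N) (Fin N) ℝ)
    (hA : ∀ i j, A i j =
      if i = j then
        (if (i : ℕ) + 1 = N then (1 / 2) * lam i ^ 2 else (3 / 4) * lam i ^ 2)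
      else lam i * lam j) :
    IsUnit A := by
  classical
  set d : Fin N → ℝ := fun i =>
    if (i : ℕ) + 1 = N then -(1/2) * lam i ^ 2 else -(1/4) * lam i ^ 2 with hd
  have hdne : ∀ i, d i ≠ 0 := by
    intro i
    have h2 := pow_ne_zero 2 (hlam i)
    simp only [hd]
    split <;> exact mul_ne_zero (by norm_num) h2
  set v : Fin N → ℝ := fun i => lam i / d i with hv
  have hfac : A = Matrix.diagonal d * (1 + Matrix.replicateCol Unit v * Matrix.replicateRow Unit lam) := by
    ext i j
    rw [hA, Matrix.diagonal_mul]
    simp only [Matrix.add_apply, Matrix.one_apply, Matrix.mul_apply, Matrix.replicateCol_apply,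
      Matrix.replicateRow_apply, Finset.univ_unique, Finset.sum_singleton]
    by_cases hij : i = j
    · subst hij
      simp only [if_pos rfl]
      by_cases h : (i : ℕ) + 1 = N <;>
        · simp only [hd, hv, if_pos, if_neg, h, if_false]
          field_simp [hlam i]
          ring
    · simp only [if_neg hij]
      simp only [hd, hv]
      by_cases h : (i : ℕ) + 1 = N <;>
        · simp only [if_pos, if_neg, h]
          field_simp [hlam i]
          ring
  have hdot : lam ⬝ᵥ v = -4 * N + 2 := by
    have hterm : ∀ i : Fin N, lam i * v i =
        -4 + (if (i : ℕ) + 1 = N then (2 : ℝ) else 0) := by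
      intro i
      have h1 := hlam i
      simp only [hv, hd]
      by_cases h : (i : ℕ) + 1 = N <;>
        · simp only [if_pos, if_neg, h, if_false]
          field_simp [h1]
          ring
    have huniq : ∀ i : Fin N, ((i : ℕ) + 1 = N) ↔ i = ⟨N - 1, by omega⟩ := by
      intro i
      constructor
      · intro h; exact Fin.ext (by simp; omega)
      · intro h; subst h; simp; omega
    calc lam ⬝ᵥ v = ∑ i : Fin N, ((-4 : ℝ) + (if (i : ℕ) + 1 = N then (2 : ℝ) else 0)) := by
          unfold dotProduct
          exact Finset.sum_congr rfl fun i _ => hterm i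
      _ = ∑ _i : Fin N, (-4 : ℝ) + ∑ i : Fin N, (if i = ⟨N - 1, by omega⟩ then (2:ℝ) else 0) := by
          rw [← Finset.sum_add_distrib]
          refine Finset.sum_congr rfl fun i _ => ?_
          exact congrArg ((-4 : ℝ) + ·) (if_congr (huniq i) rfl rfl)
      _ = -4 * N + 2 := by
          rw [Finset.sum_ite_eq' Finset.univ]
          simp [Finset.card_univ, mul_comm]
  have hdet : A.det ≠ 0 := by
    rw [hfac, Matrix.det_mul, Matrix.det_diagonal, Matrix.det_one_add_replicateCol_mul_replicateRow, hdot]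
    apply mul_ne_zero
    · exact Finset.prod_ne_zero_iff.mpr fun i _ => hdne i
    · intro h
      have h3 : (4 : ℝ) * N = 3 := by linarith
      have h4 : (4 * N : ℕ) = 3 := by exact_mod_cast h3
      omega
  exact (Matrix.isUnit_iff_isUnit_det A).mpr (isUnit_iff_ne_zero.mpr hdet)
end
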